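/- arXiv:1703.02388 — 2 statements merged into one kernel-verified Lean document; each statement's English description precedes it below -/
import Mathlib

section
/- Let u and v be integers with min(u,v) ≥ 2, s = min(u,v), t = max(u,v), and in ℝ set p₊ = s√t + √(s(4+uv)), p₋ = −s√t + √(s(4+uv)), q₊ = 2 + uv + √(uv(4+uv)) and q₋ = 2 + uv − √(uv(4+uv)). Then for every natural number n, μ(𝒯^{(u,v)}(2n+2)) = (p₊ · (q₊)^{n+1} + p₋ · (q₋)^{n+1}) / (2^{n+2} · √(s(4+uv))). -/
open Matrix Finset

def Lm (u : ℕ) : Matrix (Fin 2) (Fin 2) ℕ := !![1, 0; u, 1]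
def Rm (v : ℕ) : Matrix (Fin 2) (Fin 2) ℕ := !![1, v; 0, 1]

/-- The product of the matrices corresponding to a word: `false ↦ L_u`, `true ↦ R_v`. -/
def wordProd (u v : ℕ) (w : List Bool) : Matrix (Fin 2) (Fin 2) ℕ :=
  (w.map (fun b => if b then Rm v else Lm u)).prod

/-- μ of a matrix: maximum of the four entries. -/
def matMax (M : Matrix (Fin 2) (Fin 2) ℕ) : ℕ :=
  max (max (M 0 0) (M 0 1)) (max (M 1 0) (M 1 1))

/-- μ(𝒯^{(u,v)}(I₂;n)): maximum of μ over all products of exactly n matrices each L_u or R_v. -/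
def levelMax (u v n : ℕ) : ℕ :=
  Finset.univ.sup (fun w : Fin n → Bool => matMax (wordProd u v (List.ofFn w)))

def stepP (u v : ℕ) (c : Bool) (p : ℕ × ℕ) : ℕ × ℕ :=
  match c with
  | false => (p.1 + u * p.2, p.2)
  | true => (p.1, v * p.1 + p.2)
def runP (u v : ℕ) : List Bool → ℕ × ℕ → ℕ × ℕ
  | [], p => p
  | c :: w, p => runP u v w (stepP u v c p)
def valP (u v : ℕ) (w : List Bool) (p : ℕ × ℕ) : ℕ :=
  max (runP u v w p).1 (runP u v w p).2
def alt : Bool → ℕ → List Bool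
  | _, 0 => []
  | b, m+1 => b :: alt (!b) m
def quad (u v : ℕ) : ℕ → ℕ × ℕ × ℕ × ℕ
  | 0 => (1, v, 1, u)
  | m+1 =>
    ((quad u v m).2.1, (quad u v m).1 + v * (quad u v m).2.2.2,
     (quad u v m).2.2.2, (quad u v m).2.2.1 + u * (quad u v m).2.1)
def Xs (u v m : ℕ) : ℕ := (quad u v m).1
def Ys (u v m : ℕ) : ℕ := (quad u v m).2.2.1
lemma Xs_zero (u v : ℕ) : Xs u v 0 = 1 := rfl
lemma Xs_one (u v : ℕ) : Xs u v 1 = v := rfl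
lemma Ys_zero (u v : ℕ) : Ys u v 0 = 1 := rfl
lemma Ys_one (u v : ℕ) : Ys u v 1 = u := rfl
lemma Xs_rec (u v m : ℕ) : Xs u v (m+2) = Xs u v m + v * Ys u v (m+1) := by
  simp [Xs, Ys, quad]
lemma Ys_rec (u v m : ℕ) : Ys u v (m+2) = Ys u v m + u * Xs u v (m+1) := by
  simp [Xs, Ys, quad]

/-- the four invariants -/
lemma inv (u v : ℕ) (hu : 2 ≤ u) (hv : 2 ≤ v) (m : ℕ) :
    2 * Xs u v (m+1) ≤ v * Ys u v (m+1) + Xs u v m ∧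
    2 * Ys u v (m+1) ≤ u * Xs u v (m+1) + Ys u v m ∧
    2 * Xs u v m ≤ Xs u v (m+1) ∧
    2 * Ys u v m ≤ Ys u v (m+1) := by
  induction m with
  | zero =>
    norm_num [Xs_zero, Xs_one, Ys_zero, Ys_one]
    refine ⟨by nlinarith, by nlinarith, hv, hu⟩
  | succ m ih =>
    obtain ⟨p5, p6, p7, p8⟩ := ih
    rw [Xs_rec, Ys_rec]
    refine ⟨?_, ?_, ?_, ?_⟩
    · nlinarith [Nat.mul_le_mul_left v p6]
    · nlinarith [Nat.mul_le_mul_left u p5]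
    · omega
    · omega

lemma X_mono (u v : ℕ) (hu : 2 ≤ u) (hv : 2 ≤ v) (m : ℕ) :
    Xs u v m ≤ Xs u v (m+1) := by
  have := (inv u v hu hv m).2.2.1; omega

lemma Y_mono (u v : ℕ) (hu : 2 ≤ u) (hv : 2 ≤ v) (m : ℕ) :
    Ys u v m ≤ Ys u v (m+1) := by
  have := (inv u v hu hv m).2.2.2; omega

lemma Cprime (u v : ℕ) (hu : 2 ≤ u) (hv : 2 ≤ v) (m : ℕ) :
    Ys u v (m+1) + u * Xs u v m ≤ Ys u v m + u * Xs u v (m+1) := by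
  obtain ⟨p5, p6, p7, p8⟩ := inv u v hu hv m
  nlinarith [Nat.mul_le_mul_left u p7]

lemma Dprime (u v : ℕ) (hu : 2 ≤ u) (hv : 2 ≤ v) (m : ℕ) :
    Xs u v (m+1) + v * Ys u v m ≤ Xs u v m + v * Ys u v (m+1) := by
  obtain ⟨p5, p6, p7, p8⟩ := inv u v hu hv m
  nlinarith [Nat.mul_le_mul_left v p8]

/-- linearity of alternating values -/
lemma val_alt (u v : ℕ) (hu : 2 ≤ u) (hv : 2 ≤ v) :
    ∀ m a b, valP u v (alt false (m+1)) (a, b) = Xs u v m * a + Ys u v (m+1) * b ∧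
      valP u v (alt true (m+1)) (a, b) = Xs u v (m+1) * a + Ys u v m * b := by
  intro m
  induction m with
  | zero =>
    intro a b
    constructor
    · show max (a + u * b) b = 1 * a + u * b
      rw [Nat.max_eq_left]; · ring
      calc b = 1 * b := (one_mul b).symm
        _ ≤ u * b := Nat.mul_le_mul_right b (by omega)
        _ ≤ a + u * b := Nat.le_add_left _ _
    · show max a (v * a + b) = v * a + 1 * b
      rw [Nat.max_eq_right]; · ring
      calc a = 1 * a := (one_mul a).symm
        _ ≤ v * a := Nat.mul_le_mul_right a (by omega)
        _ ≤ v * a + b := Nat.le_add_right _ _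
  | succ m ih =>
    intro a b
    constructor
    · show valP u v (alt true (m+1)) (a + u * b, b) = _
      rw [(ih (a + u * b) b).2, Ys_rec]; ring
    · show valP u v (alt false (m+1)) (a, v * a + b) = _
      rw [(ih a (v * a + b)).1, Xs_rec]; ring

/-- stutter lemma for L -/
lemma stutterL (u v : ℕ) (hu : 2 ≤ u) (hv : 2 ≤ v) (m a b : ℕ) :
    valP u v (alt false m) (a + u * b, b) ≤ valP u v (alt true m) (a + u * b, b) := by
  cases m with
  | zero => exact le_rfl
  | succ m =>
    rw [(val_alt u v hu hv m (a + u * b) b).1, (val_alt u v hu hv m (a + u * b) b).2]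
    have h1 := Cprime u v hu hv m
    have h2 := X_mono u v hu hv m
    nlinarith [Nat.mul_le_mul_right b h1, Nat.mul_le_mul_right a h2]

lemma stutterR (u v : ℕ) (hu : 2 ≤ u) (hv : 2 ≤ v) (m a b : ℕ) :
    valP u v (alt true m) (a, v * a + b) ≤ valP u v (alt false m) (a, v * a + b) := by
  cases m with
  | zero => exact le_rfl
  | succ m =>
    rw [(val_alt u v hu hv m a (v * a + b)).1, (val_alt u v hu hv m a (v * a + b)).2]
    have h1 := Dprime u v hu hv m
    have h2 := Y_mono u v hu hv m
    nlinarith [Nat.mul_le_mul_right a h1, Nat.mul_le_mul_right b h2]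

/-- upper bound: any word is dominated by an alternating word -/
lemma ub (u v : ℕ) (hu : 2 ≤ u) (hv : 2 ≤ v) :
    ∀ (w : List Bool) a b, valP u v w (a, b) ≤
      max (valP u v (alt false w.length) (a, b)) (valP u v (alt true w.length) (a, b)) := by
  intro w
  induction w with
  | nil => intro a b; exact le_max_left _ _
  | cons c w ih =>
    intro a b
    cases c with
    | false =>
      have h0 : valP u v (false :: w) (a, b) = valP u v w (a + u * b, b) := rfl
      rw [h0]
      refine le_trans (ih (a + u * b) b) ?_
      refine le_trans (max_le (stutterL u v hu hv w.length a b) le_rfl) ?_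
      have h1 : valP u v (alt true w.length) (a + u * b, b)
          = valP u v (alt false (w.length + 1)) (a, b) := rfl
      rw [h1, List.length_cons]
      exact le_max_left _ _
    | true =>
      have h0 : valP u v (true :: w) (a, b) = valP u v w (a, v * a + b) := rfl
      rw [h0]
      refine le_trans (ih a (v * a + b)) ?_
      refine le_trans (max_le le_rfl (stutterR u v hu hv w.length a b)) ?_
      have h1 : valP u v (alt false w.length) (a, v * a + b)
          = valP u v (alt true (w.length + 1)) (a, b) := rfl
      rw [h1, List.length_cons]
      exact le_max_right _ _


lemma wordProd_cons (u v : ℕ) (c : Bool) (w : List Bool) :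
    wordProd u v (c :: w) = (if c then Rm v else Lm u) * wordProd u v w := by
  simp [wordProd]

lemma entry (u v : ℕ) : ∀ (w : List Bool) (a b : ℕ),
    (a * (wordProd u v w 0 0) + b * (wordProd u v w 1 0) = (runP u v w (a, b)).1) ∧
    (a * (wordProd u v w 0 1) + b * (wordProd u v w 1 1) = (runP u v w (a, b)).2) := by
  have hL0 : ∀ M : Matrix (Fin 2) (Fin 2) ℕ, ∀ j, (Lm u * M) 0 j = M 0 j := by
    intro M j; simp [Lm, Matrix.mul_apply, Fin.sum_univ_two]
  have hL1 : ∀ M : Matrix (Fin 2) (Fin 2) ℕ, ∀ j, (Lm u * M) 1 j = u * M 0 j + M 1 j := by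
    intro M j; simp [Lm, Matrix.mul_apply, Fin.sum_univ_two]
  have hR0 : ∀ M : Matrix (Fin 2) (Fin 2) ℕ, ∀ j, (Rm v * M) 0 j = M 0 j + v * M 1 j := by
    intro M j; simp [Rm, Matrix.mul_apply, Fin.sum_univ_two]
  have hR1 : ∀ M : Matrix (Fin 2) (Fin 2) ℕ, ∀ j, (Rm v * M) 1 j = M 1 j := by
    intro M j; simp [Rm, Matrix.mul_apply, Fin.sum_univ_two]
  intro w
  induction w with
  | nil =>
    intro a b
    have h : wordProd u v [] = 1 := rfl
    rw [h]
    constructor <;> simp [Matrix.one_apply, runP]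
  | cons c w ih =>
    intro a b
    rw [wordProd_cons]
    cases c with
    | false =>
      have h1 := (ih (a + u * b) b).1
      have h2 := (ih (a + u * b) b).2
      simp only [if_neg Bool.false_ne_true, Bool.false_eq_true, if_false]
      rw [show runP u v (false :: w) (a, b) = runP u v w (a + u * b, b) from rfl]
      constructor
      · rw [hL0, hL1, ← h1]; ring
      · rw [hL0, hL1, ← h2]; ring
    | true =>
      have h1 := (ih a (v * a + b)).1
      have h2 := (ih a (v * a + b)).2
      simp only [if_true]
      rw [show runP u v (true :: w) (a, b) = runP u v w (a, v * a + b) from rfl]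
      constructor
      · rw [hR0, hR1, ← h1]; ring
      · rw [hR0, hR1, ← h2]; ring

lemma matMax_eq (u v : ℕ) (w : List Bool) :
    matMax (wordProd u v w) = max (valP u v w (1, 0)) (valP u v w (0, 1)) := by
  have h00 := (entry u v w 1 0).1
  have h01 := (entry u v w 1 0).2
  have h10 := (entry u v w 0 1).1
  have h11 := (entry u v w 0 1).2
  simp only [one_mul, zero_mul, add_zero, zero_add] at h00 h01 h10 h11
  unfold matMax valP
  rw [h00, h01, h10, h11]

lemma ofFn_alt : ∀ (k : ℕ) (b : Bool),
    List.ofFn (fun i : Fin k => if i.val % 2 = 0 then b else !b) = alt b k := by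
  intro k
  induction k with
  | zero => intro b; simp [alt]
  | succ k ih =>
    intro b
    rw [List.ofFn_succ]
    show (if (0 : ℕ) % 2 = 0 then b else !b) ::
        List.ofFn (fun i : Fin k => if (i.val + 1) % 2 = 0 then b else !b) = b :: alt (!b) k
    have hhead : (if (0 : ℕ) % 2 = 0 then b else !b) = b := by norm_num
    have htail : (fun i : Fin k => if (i.val + 1) % 2 = 0 then b else !b)
        = (fun i : Fin k => if i.val % 2 = 0 then !b else !(!b)) := by
      funext i
      rcases Nat.even_or_odd i.val with he | ho
      · have h1 : i.val % 2 = 0 := Nat.even_iff.mp he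
        have h2 : ¬ (i.val + 1) % 2 = 0 := by omega
        simp [h1, h2]
      · have h1 : ¬ i.val % 2 = 0 := by
          have := Nat.odd_iff.mp ho; omega
        have h2 : (i.val + 1) % 2 = 0 := by
          have := Nat.odd_iff.mp ho; omega
        simp [h1, h2, Bool.not_not]
    rw [hhead, htail, ih (!b)]

lemma levelMax_eq (u v : ℕ) (hu : 2 ≤ u) (hv : 2 ≤ v) (m : ℕ) :
    levelMax u v (m + 1) = max (Xs u v (m + 1)) (Ys u v (m + 1)) := by
  apply le_antisymm
  · apply Finset.sup_le
    intro w _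
    rw [matMax_eq]
    have hlen : (List.ofFn w).length = m + 1 := by simp
    have h1 := ub u v hu hv (List.ofFn w) 1 0
    have h2 := ub u v hu hv (List.ofFn w) 0 1
    rw [hlen] at h1 h2
    rw [(val_alt u v hu hv m 1 0).1, (val_alt u v hu hv m 1 0).2] at h1
    rw [(val_alt u v hu hv m 0 1).1, (val_alt u v hu hv m 0 1).2] at h2
    simp only [mul_one, mul_zero, add_zero, zero_add] at h1 h2
    have hx := X_mono u v hu hv m
    have hy := Y_mono u v hu hv m
    apply max_le
    · exact le_trans h1 (by simp only [le_max_iff, max_le_iff]; omega)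
    · exact le_trans h2 (by simp only [le_max_iff, max_le_iff]; omega)
  · apply max_le
    · have hw : matMax (wordProd u v (alt true (m+1))) ≤ levelMax u v (m+1) := by
        have := Finset.le_sup (f := fun w : Fin (m+1) → Bool =>
          matMax (wordProd u v (List.ofFn w)))
          (Finset.mem_univ (fun i : Fin (m+1) => if i.val % 2 = 0 then true else !true))
        rwa [ofFn_alt] at this
      refine le_trans ?_ hw
      rw [matMax_eq, (val_alt u v hu hv m 1 0).2]
      simp only [mul_one, mul_zero, add_zero]
      exact le_max_of_le_left le_rfl
    · have hw : matMax (wordProd u v (alt false (m+1))) ≤ levelMax u v (m+1) := by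
        have := Finset.le_sup (f := fun w : Fin (m+1) → Bool =>
          matMax (wordProd u v (List.ofFn w)))
          (Finset.mem_univ (fun i : Fin (m+1) => if i.val % 2 = 0 then false else !false))
        rwa [ofFn_alt] at this
      refine le_trans ?_ hw
      rw [matMax_eq, (val_alt u v hu hv m 0 1).1]
      simp only [mul_one, mul_zero, zero_add]
      exact le_max_of_le_right le_rfl

lemma even_eq (u v : ℕ) : ∀ k, Xs u v (2*k) = Ys u v (2*k) ∧
    u * Xs u v (2*k+1) = v * Ys u v (2*k+1) := by
  intro k
  induction k with
  | zero => exact ⟨rfl, by simp [Xs_one, Ys_one, Nat.mul_comm]⟩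
  | succ k ih =>
    have h2k2 : 2*(k+1) = 2*k+2 := by ring
    rw [h2k2, show 2*k+2+1 = 2*k+3 from rfl]
    have hx2 : Xs u v (2*k+2) = Xs u v (2*k) + v * Ys u v (2*k+1) := Xs_rec u v (2*k)
    have hy2 : Ys u v (2*k+2) = Ys u v (2*k) + u * Xs u v (2*k+1) := Ys_rec u v (2*k)
    have hA : Xs u v (2*k+2) = Ys u v (2*k+2) := by
      rw [hx2, hy2, ih.1, ih.2]
    refine ⟨hA, ?_⟩
    have hx3 : Xs u v (2*k+3) = Xs u v (2*k+1) + v * Ys u v (2*k+2) := Xs_rec u v (2*k+1)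
    have hy3 : Ys u v (2*k+3) = Ys u v (2*k+1) + u * Xs u v (2*k+2) := Ys_rec u v (2*k+1)
    have e2 := ih.2
    zify at hx3 hy3 hA e2 ⊢
    linear_combination (u : ℤ) * hx3 - (v : ℤ) * hy3 + e2 - (u : ℤ) * v * hA

lemma even_rec (u v : ℕ) (k : ℕ) :
    Xs u v (2*k+4) + Xs u v (2*k) = (2 + u*v) * Xs u v (2*k+2) := by
  have h1 : Xs u v (2*k+2) = Xs u v (2*k) + v * Ys u v (2*k+1) := Xs_rec u v (2*k)
  have h2 : Xs u v (2*k+4) = Xs u v (2*k+2) + v * Ys u v (2*k+3) := Xs_rec u v (2*k+2)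
  have h3 : Ys u v (2*k+3) = Ys u v (2*k+1) + u * Xs u v (2*k+2) := Ys_rec u v (2*k+1)
  zify at h1 h2 h3 ⊢
  linear_combination h2 + (v : ℤ) * h3 - h1

theorem stmt2 (u v : ℕ) (hmin : 2 ≤ min u v) (n : ℕ)
    (s t : ℕ) (hs : s = min u v) (ht : t = max u v)
    (pp pm qp qm : ℝ)
    (hpp : pp = (s : ℝ) * Real.sqrt t + Real.sqrt ((s : ℝ) * (4 + (u : ℝ) * v)))
    (hpm : pm = -((s : ℝ) * Real.sqrt t) + Real.sqrt ((s : ℝ) * (4 + (u : ℝ) * v)))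
    (hqp : qp = 2 + (u : ℝ) * v + Real.sqrt ((u : ℝ) * v * (4 + (u : ℝ) * v)))
    (hqm : qm = 2 + (u : ℝ) * v - Real.sqrt ((u : ℝ) * v * (4 + (u : ℝ) * v))) :
    (levelMax u v (2 * n + 2) : ℝ) =
      (pp * qp ^ (n + 1) + pm * qm ^ (n + 1)) /
        (2 ^ (n + 2) * Real.sqrt ((s : ℝ) * (4 + (u : ℝ) * v))) := by
  have hu : 2 ≤ u := le_trans hmin (min_le_left u v)
  have hv : 2 ≤ v := le_trans hmin (min_le_right u v)
  have hsN : 2 ≤ s := hs ▸ hmin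
  have hstN : s * t = u * v := by
    rcases le_total u v with h | h
    · rw [hs, ht, min_eq_left h, max_eq_right h]
    · rw [hs, ht, min_eq_right h, max_eq_left h, Nat.mul_comm]
  have hst : (s : ℝ) * t = (u : ℝ) * v := by exact_mod_cast congrArg (Nat.cast (R := ℝ)) hstN
  set D : ℝ := (s : ℝ) * (4 + (u : ℝ) * v) with hD
  have hDpos : 0 < D := by
    have h1 : (0:ℝ) < s := by positivity
    have h2 : (0:ℝ) < 4 + (u:ℝ)*v := by positivity
    exact mul_pos h1 h2
  have hsqDpos : 0 < Real.sqrt D := Real.sqrt_pos.mpr hDpos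
  have hsqDne : Real.sqrt D ≠ 0 := ne_of_gt hsqDpos
  set E : ℝ := Real.sqrt ((u : ℝ) * v * (4 + (u : ℝ) * v)) with hE
  have hE2 : E ^ 2 = (u : ℝ) * v * (4 + (u : ℝ) * v) := by
    rw [hE]; exact Real.sq_sqrt (by positivity)
  have hqpqm : qp * qm = 4 := by
    rw [hqp, hqm]; linear_combination -hE2
  have hsum : qp + qm = 2 * (2 + (u : ℝ) * v) := by rw [hqp, hqm]; ring
  have hqp2 : qp ^ 2 = 2 * (2 + (u : ℝ) * v) * qp - 4 := by
    linear_combination qp * hsum - hqpqm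
  have hqm2 : qm ^ 2 = 2 * (2 + (u : ℝ) * v) * qm - 4 := by
    linear_combination qm * hsum - hqpqm
  set N : ℕ → ℝ := fun k => pp * qp ^ k + pm * qm ^ k with hN
  have hNrec : ∀ k, N (k + 2) = 2 * (2 + (u : ℝ) * v) * N (k + 1) - 4 * N k := by
    intro k
    have e1 : N (k + 2) = pp * qp ^ k * qp ^ 2 + pm * qm ^ k * qm ^ 2 := by
      simp only [hN]; ring
    rw [e1, hqp2, hqm2]
    simp only [hN]; ring
  have hsqt : (s : ℝ) * Real.sqrt t * E = ((u : ℝ) * v) * Real.sqrt D := by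
    have h1 : (s : ℝ) * Real.sqrt t = Real.sqrt ((s : ℝ) ^ 2 * t) := by
      rw [Real.sqrt_mul (by positivity), Real.sqrt_sq (by positivity)]
    rw [h1, hE, ← Real.sqrt_mul (by positivity)]
    have h2 : (s : ℝ) ^ 2 * t * ((u : ℝ) * v * (4 + (u : ℝ) * v))
        = ((u : ℝ) * v) ^ 2 * D := by
      rw [hD]; linear_combination ((s : ℝ) * (u * v) * (4 + (u : ℝ) * v)) * hst
    rw [h2, Real.sqrt_mul (by positivity), Real.sqrt_sq (by positivity)]
  have hN0 : N 0 = 2 * Real.sqrt D := by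
    simp only [hN, pow_zero, mul_one]; rw [hpp, hpm]; ring
  have hN1 : N 1 = (2 * (2 + (u : ℝ) * v) + 2 * ((u : ℝ) * v)) * Real.sqrt D := by
    simp only [hN, pow_one]; rw [hpp, hpm, hqp, hqm]
    linear_combination 2 * hsqt
  -- closed form for Xs at even indices
  have main : ∀ k : ℕ, ((Xs u v (2 * k) : ℝ) = N k / (2 ^ (k + 1) * Real.sqrt D)) ∧
      ((Xs u v (2 * k + 2) : ℝ) = N (k + 1) / (2 ^ (k + 2) * Real.sqrt D)) := by
    intro k
    induction k with
    | zero =>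
      constructor
      · show ((Xs u v 0 : ℕ) : ℝ) = N 0 / (2 ^ 1 * Real.sqrt D)
        rw [Xs_zero, hN0]
        field_simp
        norm_num
      · show ((Xs u v 2 : ℕ) : ℝ) = N 1 / (2 ^ 2 * Real.sqrt D)
        have h2 : Xs u v 2 = 1 + v * u := by
          rw [show (2:ℕ) = 0 + 2 from rfl, Xs_rec, Xs_zero, Ys_one]
        rw [h2, hN1]
        push_cast
        field_simp
        ring
    | succ k ih =>
      constructor
      · rw [show 2 * (k + 1) = 2 * k + 2 from by ring]
        exact ih.2
      · rw [show 2 * (k + 1) + 2 = 2 * k + 4 from by ring]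
        have hc : (Xs u v (2 * k + 4) : ℝ)
            = (2 + (u : ℝ) * v) * (Xs u v (2 * k + 2) : ℝ) - (Xs u v (2 * k) : ℝ) := by
          have h := even_rec u v k
          have h' := congrArg (Nat.cast (R := ℝ)) h
          push_cast at h'
          linarith
        rw [hc, ih.1, ih.2, hNrec k]
        field_simp
        ring
  -- assemble
  have hlm : levelMax u v (2 * n + 2) = Xs u v (2 * n + 2) := by
    rw [show 2 * n + 2 = (2 * n + 1) + 1 from rfl, levelMax_eq u v hu hv (2 * n + 1)]
    have he : Xs u v (2 * (n + 1)) = Ys u v (2 * (n + 1)) := (even_eq u v (n + 1)).1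
    rw [show 2 * (n + 1) = 2 * n + 1 + 1 from by ring] at he
    rw [← he, max_self]
  rw [hlm]
  exact (main n).2
end

section
/- Let u and v be positive integers with min(u,v) = 1 and t = max(u,v), and in ℝ set p₊ = √t + √(4+uv), p₋ = −√t + √(4+uv), q₊ = 2 + uv + √(uv(4+uv)) and q₋ = 2 + uv − √(uv(4+uv)). Then for every natural number n, μ(𝒯^{(u,v)}(2n+2)) = √t · ((√t·p₋ + 2)·(q₊)^{n+1} + (√t·p₊ − 2)·(q₋)^{n+1}) / (2^{n+2} · √(4+uv)). -/
open Matrix Finset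

def sAB (t : ℕ) : ℕ → ℕ × ℕ
  | 0 => (1, 2*t)
  | n+1 => ((sAB t n).1 + (sAB t n).2, t*((sAB t n).1 + (sAB t n).2) + (sAB t n).2)

def sCD (t : ℕ) : ℕ → ℕ × ℕ
  | 0 => (t+1, t)
  | n+1 => ((t+1)*(sCD t n).1 + (sCD t n).2, t*(sCD t n).1 + (sCD t n).2)

lemma inv_s3 (t : ℕ) (ht : 1 ≤ t) (n : ℕ) :
    (sAB t n).1 + (sAB t n).2 = (sCD t n).1 + (sCD t n).2 ∧
    (sAB t n).2 + t*(sCD t n).2 = t*(sCD t n).1 + (sCD t n).2 ∧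
    (sAB t n).1 ≤ (sCD t n).2 ∧ (sCD t n).2 ≤ (sCD t n).1 ∧
    (sCD t n).1 ≤ 2*(sCD t n).2 := by
  induction n with
  | zero =>
    refine ⟨by simp [sAB, sCD]; ring, by simp [sAB, sCD]; ring, ?_, ?_, ?_⟩ <;>
      simp [sAB, sCD] <;> omega
  | succ k ih =>
    obtain ⟨G, F, h1, h2, h3⟩ := ih
    set A := (sAB t k).1; set B := (sAB t k).2
    set C := (sCD t k).1; set D := (sCD t k).2
    have hDtD : D ≤ t*D := Nat.le_mul_of_pos_left D (by omega)
    have hCtC : C ≤ t*C := Nat.le_mul_of_pos_left C (by omega)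
    refine ⟨?_, ?_, ?_, ?_, ?_⟩ <;> simp only [sAB, sCD]
    · zify at G F ⊢; linear_combination ((t:ℤ)+1)*G + F
    · zify at G F ⊢; linear_combination (t:ℤ)*G + F
    · zify at F h1 hDtD ⊢; linarith
    · zify at hCtC ⊢; linarith
    · zify at hCtC hDtD h2 ⊢; linarith

lemma wordProd_append (u v : ℕ) (l₁ l₂ : List Bool) :
    wordProd u v (l₁ ++ l₂) = wordProd u v l₁ * wordProd u v l₂ := by
  simp [wordProd]

lemma entry_comb (N K : Matrix (Fin 2) (Fin 2) ℕ) (i : Fin 2) (a b : ℕ) :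
    (N*K) i 0 * a + (N*K) i 1 * b
      = N i 0 * (K 0 0 * a + K 0 1 * b) + N i 1 * (K 1 0 * a + K 1 1 * b) := by
  simp [Matrix.mul_apply, Fin.sum_univ_two]; ring

lemma aux5 (t C D : ℕ) (ht : 1 ≤ t) (h : C ≤ 2*D) : t*C + 2*D ≤ 2*(t*D) + C := by
  obtain ⟨s, rfl⟩ := Nat.exists_eq_add_of_le ht
  nlinarith [Nat.mul_le_mul_left s h]

set_option maxHeartbeats 2000000 in
lemma ub_s3 (t : ℕ) (ht : 1 ≤ t) : ∀ n (w : List Bool), w.length = 2*n+2 →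
    ∀ a b : ℕ, ∀ i : Fin 2,
    wordProd t 1 w.reverse i 0 * a + wordProd t 1 w.reverse i 1 * b ≤
      max ((sAB t n).2 * a + (sAB t n).1 * b) ((sCD t n).2 * a + (sCD t n).1 * b) := by
  intro n
  induction n with
  | zero =>
    intro w hw a b i
    match w, hw with
    | [x, y], _ =>
      fin_cases i <;> cases x <;> cases y <;>
        simp [wordProd, Lm, Rm, Matrix.mul_apply, Fin.sum_univ_two, sAB, sCD] <;>
        first
          | (left; nlinarith [mul_le_mul_left ht a, mul_le_mul_left ht b])
          | (right; nlinarith [mul_le_mul_left ht a, mul_le_mul_left ht b])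
  | succ k ih =>
    intro w hw a b i
    match w, hw with
    | x :: y :: w', hw =>
      have hw' : w'.length = 2*k+2 := by simp at hw; omega
      have hrev : (x :: y :: w').reverse = w'.reverse ++ [y, x] := by simp
      rw [hrev, wordProd_append, entry_comb]
      refine le_trans (ih w' hw' _ _ i) ?_
      obtain ⟨G, F, h1, h2, h3⟩ := inv_s3 t ht k
      set A := (sAB t k).1; set B := (sAB t k).2
      set C := (sCD t k).1; set D := (sCD t k).2
      have hG2 : t*(A+B) = t*(C+D) := by rw [G]
      have htCD : t*D ≤ t*C := Nat.mul_le_mul_left t h2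
      have htAD : t*A ≤ t*D := Nat.mul_le_mul_left t h1
      have hDB : D ≤ B := by zify at F htCD ⊢; linarith
      have hAB : A ≤ B := le_trans h1 hDB
      have hAC : A ≤ C := le_trans h1 h2
      have hCtC : C ≤ t*C := Nat.le_mul_of_pos_left C (by omega)
      have h5 := aux5 t C D ht h3
      simp only [sAB, sCD]
      have cLLP1 : B + 2*t*A ≤ t*(A+B)+B := by
        zify at htAD h1 ⊢; nlinarith [Nat.mul_le_mul_left t hAB]
      have cLLP2 : A ≤ A + B := Nat.le_add_right _ _
      have cLLQ1 : D + 2*t*C ≤ t*(A+B)+B := by zify at hG2 F ⊢; linarith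
      have cLLQ2 : C ≤ A + B := by omega
      have cLRQ1 : (1+t)*D + t*C ≤ t*(A+B)+B := by zify at hG2 F hDB ⊢; linarith
      have cLRQ2 : D + C ≤ A + B := by omega
      have cRLP1 : B + t*A ≤ t*C + D := by zify at F htAD ⊢; linarith
      have cRLP2 : B + (t+1)*A ≤ (t+1)*C + D := by zify at F htAD hAC ⊢; linarith
      have cRRP1 : B ≤ t*C + D := by zify at F ⊢; linarith [Int.ofNat_nonneg (t*D)]
      have cRRP2 : 2*B + A ≤ (t+1)*C + D := by zify at F h5 h1 ⊢; linarith
      have cRRQ1 : D ≤ t*C + D := Nat.le_add_left _ _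
      have cRRQ2 : 2*D + C ≤ (t+1)*C + D := by zify at h2 hCtC ⊢; linarith
      cases x <;> cases y <;>
        simp [wordProd, Lm, Rm, Matrix.mul_apply, Fin.sum_univ_two]
      · left; constructor <;>
          linarith [mul_le_mul_left cLLP1 a, mul_le_mul_left cLLP2 b,
            mul_le_mul_left cLLQ1 a, mul_le_mul_left cLLQ2 b]
      · left; constructor <;>
          linarith [mul_le_mul_left cLRQ1 a, mul_le_mul_left cLRQ2 b]
      · right; constructor <;>
          linarith [mul_le_mul_left cRLP1 a, mul_le_mul_left cRLP2 b]
      · right; constructor <;>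
          linarith [mul_le_mul_left cRRP1 a, mul_le_mul_left cRRP2 b,
            mul_le_mul_left cRRQ1 a, mul_le_mul_left cRRQ2 b]

lemma matMax_le_levelMax (u v : ℕ) (w : List Bool) :
    matMax (wordProd u v w) ≤ levelMax u v w.length := by
  have h := Finset.le_sup (f := fun g : Fin w.length → Bool => matMax (wordProd u v (List.ofFn g)))
    (Finset.mem_univ w.get)
  simpa [List.ofFn_get, levelMax] using h

def wLow : ℕ → List Bool
  | 0 => [false, false]
  | n+1 => wLow n ++ [true, false]

lemma wLow_length (n : ℕ) : (wLow n).length = 2*n+2 := by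
  induction n with
  | zero => simp [wLow]
  | succ k ih => simp [wLow, ih]; omega

lemma wLow_prod (t : ℕ) (n : ℕ) :
    wordProd t 1 (wLow n) 1 0 = (sAB t n).2 ∧ wordProd t 1 (wLow n) 1 1 = (sAB t n).1 := by
  induction n with
  | zero =>
    constructor <;>
      simp [wLow, wordProd, Lm, Rm, Matrix.mul_apply, Fin.sum_univ_two, sAB] <;> ring
  | succ k ih =>
    obtain ⟨i10, i11⟩ := ih
    have hsplit : wordProd t 1 (wLow (k+1)) = wordProd t 1 (wLow k) * wordProd t 1 [true, false] := by
      rw [wLow, wordProd_append]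
    have hK : wordProd t 1 [true, false] = !![1+t,1;t,1] := by
      simp [wordProd, Lm, Rm, Matrix.mul_fin_two] <;> ring_nf
    constructor <;> rw [hsplit, hK] <;>
      simp [Matrix.mul_apply, Fin.sum_univ_two, i10, i11, sAB] <;> ring

lemma B_le_levelMax (t : ℕ) (n : ℕ) : (sAB t n).2 ≤ levelMax t 1 (2*n+2) := by
  have h := matMax_le_levelMax t 1 (wLow n)
  rw [wLow_length] at h
  refine le_trans ?_ h
  rw [← (wLow_prod t n).1]
  exact le_max_of_le_right (le_max_left _ _)

lemma levelMax_le_B (t : ℕ) (ht : 1 ≤ t) (n : ℕ) : levelMax t 1 (2*n+2) ≤ (sAB t n).2 := by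
  obtain ⟨G, F, h1, h2, h3⟩ := inv_s3 t ht n
  have htCD : t*(sCD t n).2 ≤ t*(sCD t n).1 := Nat.mul_le_mul_left t h2
  have hDB : (sCD t n).2 ≤ (sAB t n).2 := by zify at F htCD ⊢; linarith
  have hCB : (sCD t n).1 ≤ (sAB t n).2 := by
    have key : ((t:ℤ)-1) * (sCD t n).2 ≤ ((t:ℤ)-1) * (sCD t n).1 := by
      apply mul_le_mul_of_nonneg_left (by exact_mod_cast h2)
      have : (1:ℤ) ≤ t := by exact_mod_cast ht
      linarith
    zify at F ⊢; linarith
  have hAB : (sAB t n).1 ≤ (sAB t n).2 := le_trans h1 hDB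
  apply Finset.sup_le
  intro f _
  have hlen : ((List.ofFn f).reverse).length = 2*n+2 := by simp
  have hrev : ((List.ofFn f).reverse).reverse = List.ofFn f := by simp
  have e00 := ub_s3 t ht n _ hlen 1 0 0
  have e01 := ub_s3 t ht n _ hlen 0 1 0
  have e10 := ub_s3 t ht n _ hlen 1 0 1
  have e11 := ub_s3 t ht n _ hlen 0 1 1
  rw [hrev] at e00 e01 e10 e11
  simp only [mul_one, mul_zero, add_zero, zero_add] at e00 e01 e10 e11
  have mB : max (sAB t n).2 (sCD t n).2 ≤ (sAB t n).2 := max_le le_rfl hDB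
  have mC : max (sAB t n).1 (sCD t n).1 ≤ (sAB t n).2 := max_le hAB hCB
  exact max_le (max_le (e00.trans mB) (e01.trans mC)) (max_le (e10.trans mB) (e11.trans mC))

lemma matMax_transpose (M : Matrix (Fin 2) (Fin 2) ℕ) : matMax Mᵀ = matMax M := by
  simp [matMax, Matrix.transpose_apply]
  omega

lemma wordProd_transpose (u v : ℕ) (w : List Bool) :
    (wordProd u v w)ᵀ = wordProd v u (w.reverse.map not) := by
  induction w with
  | nil => simp [wordProd]
  | cons x w ih =>
    have h1 : wordProd u v (x :: w) = (if x then Rm v else Lm u) * wordProd u v w := by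
      simp [wordProd]
    have h2 : (x :: w).reverse.map not = w.reverse.map not ++ [!x] := by simp
    rw [h1, Matrix.transpose_mul, ih, h2, wordProd_append]
    congr 1
    cases x <;> simp [wordProd] <;> ext i j <;> fin_cases i <;> fin_cases j <;>
      simp [Lm, Rm, Matrix.transpose_apply]

lemma levelMax_comm (u v k : ℕ) : levelMax u v k = levelMax v u k := by
  suffices h : ∀ u v : ℕ, levelMax u v k ≤ levelMax v u k from le_antisymm (h u v) (h v u)
  intro u v
  apply Finset.sup_le
  intro f _
  have h := matMax_le_levelMax v u (((List.ofFn f).reverse).map not)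
  rw [← wordProd_transpose, matMax_transpose] at h
  simpa using h

lemma levelMax_eq_B (t : ℕ) (ht : 1 ≤ t) (n : ℕ) : levelMax t 1 (2*n+2) = (sAB t n).2 :=
  le_antisymm (levelMax_le_B t ht n) (B_le_levelMax t n)

lemma sAB_rec (t k : ℕ) :
    (sAB t (k+2)).2 + (sAB t k).2 = (t+2) * (sAB t (k+1)).2 := by
  simp [sAB]; ring

lemma closed_real (t : ℕ) (ht : 1 ≤ t) (n : ℕ) :
    ((sAB t n).2 : ℝ) =
      Real.sqrt t * ((Real.sqrt t * (-Real.sqrt t + Real.sqrt (4 + (t:ℝ))) + 2) *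
          (2 + (t:ℝ) + Real.sqrt ((t:ℝ) * (4 + (t:ℝ)))) ^ (n + 1) +
        (Real.sqrt t * (Real.sqrt t + Real.sqrt (4 + (t:ℝ))) - 2) *
          (2 + (t:ℝ) - Real.sqrt ((t:ℝ) * (4 + (t:ℝ)))) ^ (n + 1)) /
      (2 ^ (n + 2) * Real.sqrt (4 + (t:ℝ))) := by
  have h4 : (0:ℝ) ≤ (t:ℝ) := by positivity
  have hsr : Real.sqrt ((t:ℝ) * (4 + (t:ℝ))) = Real.sqrt t * Real.sqrt (4 + (t:ℝ)) :=
    Real.sqrt_mul h4 _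
  rw [hsr]
  set s := Real.sqrt (t:ℝ) with hs_def
  set r := Real.sqrt (4 + (t:ℝ)) with hr_def
  have hs : s^2 = t := Real.sq_sqrt h4
  have hr : r^2 = 4 + t := Real.sq_sqrt (by positivity)
  have hrpos : 0 < r := Real.sqrt_pos.mpr (by positivity)
  have hsr2 : (s*r)^2 = t*(4+(t:ℝ)) := by rw [mul_pow, hs, hr]
  have hqp2 : (2 + (t:ℝ) + s*r)^2 = (2*t+4)*(2 + (t:ℝ) + s*r) - 4 := by linear_combination hsr2
  have hqm2 : (2 + (t:ℝ) - s*r)^2 = (2*t+4)*(2 + (t:ℝ) - s*r) - 4 := by linear_combination hsr2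
  have key : ∀ m : ℕ,
      ((s * (-s + r) + 2) * (2 + (t:ℝ) + s*r) ^ (m + 1) +
        (s * (s + r) - 2) * (2 + (t:ℝ) - s*r) ^ (m + 1)) * s
        = ((sAB t m).2 : ℝ) * (2 ^ (m + 2) * r) ∧
      ((s * (-s + r) + 2) * (2 + (t:ℝ) + s*r) ^ (m + 2) +
        (s * (s + r) - 2) * (2 + (t:ℝ) - s*r) ^ (m + 2)) * s
        = ((sAB t (m+1)).2 : ℝ) * (2 ^ (m + 3) * r) := by
    intro m
    induction m with
    | zero =>
      have hB0 : ((sAB t 0).2 : ℝ) = 2*t := by push_cast [sAB]; ring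
      have hB1 : ((sAB t 1).2 : ℝ) = 2*t^2 + 3*t := by push_cast [sAB]; ring
      constructor
      · rw [hB0]; linear_combination ((8:ℝ)*r - 2*s^2*r) * hs
      · rw [hB1]
        linear_combination ((24:ℝ)*r + 8*r*t - 2*r*t^2 + 2*r^3*t - 8*s^2*r - 4*s^2*r*t + 2*s^2*r^3) * hs
          + (2*r*(t:ℝ)^2) * hr
    | succ k ih =>
      refine ⟨ih.2, ?_⟩
      have hBrec : ((sAB t (k+2)).2 : ℝ) + ((sAB t k).2 : ℝ) = ((t:ℝ)+2) * ((sAB t (k+1)).2 : ℝ) := by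
        exact_mod_cast congrArg (Nat.cast (R := ℝ)) (sAB_rec t k)
      linear_combination (2*(t:ℝ)+4) * ih.2 - 4 * ih.1
        + ((s * (-s + r) + 2) * s * (2 + (t:ℝ) + s*r)^(k+1)) * hqp2
        + ((s * (s + r) - 2) * s * (2 + (t:ℝ) - s*r)^(k+1)) * hqm2
        + (-(2:ℝ)^(k+4) * r) * hBrec
  rw [eq_div_iff (by positivity)]
  linear_combination -(key n).1

theorem stmt3 (u v : ℕ) (hu : 1 ≤ u) (hv : 1 ≤ v) (hmin : min u v = 1) (n : ℕ)
    (t : ℕ) (ht : t = max u v)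
    (pp pm qp qm : ℝ)
    (hpp : pp = Real.sqrt t + Real.sqrt (4 + (u : ℝ) * v))
    (hpm : pm = -Real.sqrt t + Real.sqrt (4 + (u : ℝ) * v))
    (hqp : qp = 2 + (u : ℝ) * v + Real.sqrt ((u : ℝ) * v * (4 + (u : ℝ) * v)))
    (hqm : qm = 2 + (u : ℝ) * v - Real.sqrt ((u : ℝ) * v * (4 + (u : ℝ) * v))) :
    (levelMax u v (2 * n + 2) : ℝ) =
      Real.sqrt t * ((Real.sqrt t * pm + 2) * qp ^ (n + 1) + (Real.sqrt t * pp - 2) * qm ^ (n + 1)) /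
        (2 ^ (n + 2) * Real.sqrt (4 + (u : ℝ) * v)) := by
  subst hpp hpm hqp hqm
  have hcase : u = 1 ∨ v = 1 := by omega
  have ht1 : 1 ≤ t := by omega
  have huvt : u * v = t := by rcases hcase with h | h <;> subst h <;> simp at ht ⊢ <;> omega
  have huv : (u:ℝ) * v = (t:ℝ) := by exact_mod_cast congrArg (Nat.cast (R := ℝ)) huvt
  rw [huv]
  have hlm : levelMax u v (2 * n + 2) = (sAB t n).2 := by
    rcases hcase with h | h
    · subst h
      have : t = v := by omega
      subst this
      rw [levelMax_comm]
      exact levelMax_eq_B t ht1 n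
    · subst h
      have : t = u := by omega
      subst this
      exact levelMax_eq_B t ht1 n
  rw [hlm]
  exact closed_real t ht1 n
end
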